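/- Let 𝒜 and ℬ be uniform algebras on compact Hausdorff spaces X and Y, and T : 𝒜⁻¹ → ℬ⁻¹ a surjective map with ‖TfTg‖∞ = ‖fg‖∞ for all f, g ∈ 𝒜⁻¹. Then ‖Tf‖∞ = ‖f‖∞ for every f ∈ 𝒜⁻¹. -/
import Mathlib


/-- The peripheral spectrum of a continuous function on a compact space. -/
noncomputable def perSpec {X : Type*} [TopologicalSpace X] [CompactSpace X]
    (f : C(X, ℂ)) : Set ℂ :=
  {z | z ∈ Set.range f ∧ ‖z‖ = ‖f‖}

/-- A peak set for a subalgebra of C(X, ℂ). -/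
def IsPeakSet {X : Type*} [TopologicalSpace X] [CompactSpace X]
    (A : Subalgebra ℂ C(X, ℂ)) (E : Set X) : Prop :=
  ∃ f ∈ A, perSpec f = {1} ∧ E = f ⁻¹' {1}

/-- The Choquet boundary (set of p-points): points x such that {x} is an
intersection of peak sets. -/
def ChoquetBdry {X : Type*} [TopologicalSpace X] [CompactSpace X]
    (A : Subalgebra ℂ C(X, ℂ)) : Set X :=
  {x | ∃ P : Set (Set X), (∀ E ∈ P, IsPeakSet A E) ∧ ⋂₀ P = {x}}

/-- In `C(X, ℂ)` with the sup norm, `‖g * g‖ = ‖g‖ * ‖g‖`. -/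
lemma norm_mul_self_eq {X : Type*} [TopologicalSpace X] [CompactSpace X]
    (g : C(X, ℂ)) : ‖g * g‖ = ‖g‖ * ‖g‖ := by
  apply le_antisymm (norm_mul_le g g)
  have h1 : ‖g‖ ≤ Real.sqrt ‖g * g‖ := by
    rw [ContinuousMap.norm_le _ (Real.sqrt_nonneg _)]
    intro x
    rw [← Real.sqrt_sq (norm_nonneg (g x))]
    apply Real.sqrt_le_sqrt
    calc ‖g x‖ ^ 2 = ‖(g * g) x‖ := by
          simp [sq, ContinuousMap.mul_apply]
      _ ≤ ‖g * g‖ := ContinuousMap.norm_coe_le_norm _ x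
  calc ‖g‖ * ‖g‖ ≤ Real.sqrt ‖g * g‖ * Real.sqrt ‖g * g‖ :=
        mul_le_mul h1 h1 (norm_nonneg g) (Real.sqrt_nonneg _)
    _ = ‖g * g‖ := Real.mul_self_sqrt (norm_nonneg _)


theorem stmt6 {X Y : Type*} [TopologicalSpace X] [CompactSpace X]
    [TopologicalSpace Y] [CompactSpace Y]
    (A : Subalgebra ℂ C(X, ℂ)) (B : Subalgebra ℂ C(Y, ℂ))
    (hA : IsClosed (A : Set C(X, ℂ))) (hB : IsClosed (B : Set C(Y, ℂ)))
    (hAsep : ∀ x x' : X, x ≠ x' → ∃ f ∈ A, f x ≠ f x')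
    (hBsep : ∀ y y' : Y, y ≠ y' → ∃ g ∈ B, g y ≠ g y')
    (T : (↥A)ˣ → (↥B)ˣ) (hsurj : Function.Surjective T)
    (h : ∀ f g : (↥A)ˣ, ‖(((T f * T g : (↥B)ˣ) : ↥B) : C(Y, ℂ))‖
        = ‖(((f * g : (↥A)ˣ) : ↥A) : C(X, ℂ))‖) :
    ∀ f : (↥A)ˣ, ‖(((T f : ↥B)) : C(Y, ℂ))‖ = ‖(((f : ↥A)) : C(X, ℂ))‖ := by
  intro f
  have key := h f f
  have hTf : (((T f * T f : (↥B)ˣ) : ↥B) : C(Y, ℂ))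
      = ((T f : ↥B) : C(Y, ℂ)) * ((T f : ↥B) : C(Y, ℂ)) := by
    push_cast
    ring
  have hf : (((f * f : (↥A)ˣ) : ↥A) : C(X, ℂ))
      = ((f : ↥A) : C(X, ℂ)) * ((f : ↥A) : C(X, ℂ)) := by
    push_cast
    ring
  rw [hTf, hf, norm_mul_self_eq, norm_mul_self_eq] at key
  nlinarith [norm_nonneg (((T f : ↥B)) : C(Y, ℂ)), norm_nonneg (((f : ↥A)) : C(X, ℂ))]
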